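/- If x → x' is a move in NIM(k+1,k) from a position x with B(x) odd, then B(x') ≥ B(x) − 2. -/
import Mathlib


/-- `z` is a basic position with parameter `b`: coordinate sum `k*b`, all coordinates
at most `b`, all coordinates even if `b` is even, exactly one even if `b` is odd. -/
def IsBasic (k : ℕ) (z : Fin (k+1) → ℕ) (b : ℕ) : Prop :=
  (∑ i, z i) = k * b ∧ (∀ i, z i ≤ b) ∧
    (Even b → ∀ i, Even (z i)) ∧ (Odd b → ∃! i, Even (z i))

/-- `Pre k y x` means `y ⪯ x`: the sorted vector of `y` is componentwise ≤ that of `x`. -/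
def Pre (k : ℕ) (y x : Fin (k+1) → ℕ) : Prop :=
  ∀ i, (y ∘ Tuple.sort y) i ≤ (x ∘ Tuple.sort x) i

/-- `BVal k x = max { b : some basic z with parameter b satisfies z ⪯ x }`. -/
noncomputable def BVal (k : ℕ) (x : Fin (k+1) → ℕ) : ℕ :=
  sSup {b | ∃ z, IsBasic k z b ∧ Pre k z x}

/-- A move in NIM(k+1,k): keep coordinate `i`, decrease every other (positive) coordinate by 1. -/
def MoveK (k : ℕ) (x y : Fin (k+1) → ℕ) : Prop :=
  ∃ i, (∀ j, j ≠ i → 0 < x j) ∧ ∀ j, y j = if j = i then x j else x j - 1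

/-- The M-move: keep a smallest even coordinate if one exists, otherwise keep a
largest coordinate; decrease the other k (positive) coordinates by 1. -/
def MMove (k : ℕ) (x y : Fin (k+1) → ℕ) : Prop :=
  ∃ i, (∀ j, j ≠ i → 0 < x j) ∧
    ((∃ j, Even (x j)) → Even (x i) ∧ ∀ j, Even (x j) → x i ≤ x j) ∧
    ((∀ j, Odd (x j)) → ∀ j, x j ≤ x i) ∧
    (∀ j, y j = if j = i then x j else x j - 1)

/-- Exceptional position: all coordinates odd, all `< m`, and `|x| = k*m + k - 1`
for some even `m`. -/
def Exceptional (k : ℕ) (x : Fin (k+1) → ℕ) : Prop :=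
  ∃ m, Even m ∧ (∀ i, Odd (x i)) ∧ (∀ i, x i < m) ∧ (∑ i, x i) = k * m + k - 1

/-- `MVal k x m`: playing the M-rule from `x`, the game ends after exactly `m` moves. -/
inductive MVal (k : ℕ) : (Fin (k+1) → ℕ) → ℕ → Prop
  | zero (x) : (¬ ∃ y, MoveK k x y) → MVal k x 0
  | succ (x y m) : MMove k x y → MVal k y m → MVal k x (m + 1)


lemma pigeon {n : ℕ} (φ : Fin n → Fin n) (hφ : Function.Injective φ) (i : Fin n) :
    ∃ j, j ≤ i ∧ i ≤ φ j := by
  by_contra hcon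
  push_neg at hcon
  have hmaps : ∀ j ∈ Finset.Iic i, φ j ∈ Finset.Iio i :=
    fun j hj => Finset.mem_Iio.mpr (hcon j (Finset.mem_Iic.mp hj))
  have hcard := Finset.card_le_card_of_injOn φ hmaps hφ.injOn
  rw [Fin.card_Iic, Fin.card_Iio] at hcard
  omega

lemma sorted_le {n : ℕ} (y x : Fin n → ℕ) (σ : Equiv.Perm (Fin n))
    (h : ∀ j, y (σ j) ≤ x j) : ∀ i, (y ∘ Tuple.sort y) i ≤ (x ∘ Tuple.sort x) i := by
  intro i
  set φ : Fin n → Fin n := fun j => (Tuple.sort y).symm (σ (Tuple.sort x j)) with hφdef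
  have hinj : Function.Injective φ :=
    (Tuple.sort y).symm.injective.comp (σ.injective.comp (Tuple.sort x).injective)
  obtain ⟨j, hj, hij⟩ := pigeon φ hinj i
  calc (y ∘ Tuple.sort y) i ≤ (y ∘ Tuple.sort y) (φ j) := Tuple.monotone_sort y hij
    _ = y (σ (Tuple.sort x j)) := by simp [hφdef]
    _ ≤ x (Tuple.sort x j) := h _
    _ = (x ∘ Tuple.sort x) j := rfl
    _ ≤ (x ∘ Tuple.sort x) i := Tuple.monotone_sort x hj

set_option maxHeartbeats 2000000 in
lemma construct (k b : ℕ) (hk : 2 ≤ k) (hb : Odd b) (hb3 : 3 ≤ b)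
    (z : Fin (k+1) → ℕ) (hz : IsBasic k z b) :
    ∃ z', IsBasic k z' (b-2) ∧ ∀ j, z' j ≤ z j - 1 := by
  obtain ⟨hsum, hle, _, hodd⟩ := hz
  obtain ⟨e, he, hu⟩ := hodd hb
  have hb2 : b % 2 = 1 := Nat.odd_iff.mp hb
  have hodd' : ∀ j, j ≠ e → z j % 2 = 1 := by
    intro j hj
    rcases Nat.even_or_odd (z j) with h | h
    · exact absurd (hu j h) hj
    · exact Nat.odd_iff.mp h
  have hee : z e % 2 = 0 := Nat.even_iff.mp he
  have heb : z e ≤ b - 1 := by have := hle e; omega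
  by_cases hze : z e = 0
  · -- Case B : all other coordinates are b
    have hall : ∀ j, j ≠ e → z j = b := by
      intro j hj
      by_contra hne
      have hlt : z j < b := lt_of_le_of_ne (hle j) hne
      have h1 : z e + ∑ i ∈ Finset.univ.erase e, z i = ∑ i, z i :=
        Finset.add_sum_erase _ z (Finset.mem_univ e)
      have hje : j ∈ Finset.univ.erase e := Finset.mem_erase.mpr ⟨hj, Finset.mem_univ j⟩
      have h2 : z j + ∑ i ∈ (Finset.univ.erase e).erase j, z i
          = ∑ i ∈ Finset.univ.erase e, z i := Finset.add_sum_erase _ z hje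
      have h3 : ∑ i ∈ (Finset.univ.erase e).erase j, z i
          ≤ ((Finset.univ.erase e).erase j).card • b :=
        Finset.sum_le_card_nsmul _ _ _ (fun i _ => hle i)
      have hc : ((Finset.univ.erase e).erase j).card = k - 1 := by
        rw [Finset.card_erase_of_mem hje, Finset.card_erase_of_mem (Finset.mem_univ e)]
        simp
      rw [hc, smul_eq_mul] at h3
      have hkk : (k-1) * b + b = k * b := by
        have h5 : k - 1 + 1 = k := by omega
        nlinarith [h5]
      omega
    refine ⟨fun j => if j = e then 0 else b - 2, ⟨?_, ?_, ?_, ?_⟩, ?_⟩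
    · have h1 : ∑ j, (if j = e then 0 else b - 2)
          = (if e = e then 0 else b - 2) + ∑ j ∈ Finset.univ.erase e, (if j = e then 0 else b-2) :=
        (Finset.add_sum_erase _ _ (Finset.mem_univ e)).symm
      rw [h1, if_pos rfl, Finset.sum_congr rfl (fun j hj => if_neg (Finset.mem_erase.mp hj).1),
        Finset.sum_const, Finset.card_erase_of_mem (Finset.mem_univ e)]
      simp [smul_eq_mul, Nat.mul_sub]
    · intro i; dsimp only; split <;> omega
    · intro hev; exfalso; have := Nat.even_iff.mp hev; omega
    · intro _
      refine ⟨e, by simp, ?_⟩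
      intro j hj
      by_contra hne
      dsimp only at hj
      rw [if_neg hne] at hj
      have := Nat.even_iff.mp hj; omega
    · intro j
      dsimp only
      by_cases hj : j = e
      · simp [hj, hze]
      · rw [if_neg hj, hall j hj]; omega
  · -- Case A : z e ≥ 2
    have hze2 : 2 ≤ z e := by omega
    have hstar : ∃ js, js ≠ e ∧ z js ≤ b - 2 ∧ ∀ j, j ≠ e → j ≠ js → 3 ≤ z j := by
      by_cases h1 : ∃ j1, j1 ≠ e ∧ z j1 = 1
      · obtain ⟨j1, hj1e, hj1⟩ := h1
        refine ⟨j1, hj1e, by omega, ?_⟩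
        intro j hje hjj
        have hjo := hodd' j hje
        rcases Nat.lt_or_ge (z j) 3 with hlt | hge
        · exfalso
          have hzj : z j = 1 := by omega
          have hmem1 : j1 ∈ Finset.univ.erase e := Finset.mem_erase.mpr ⟨hj1e, Finset.mem_univ _⟩
          have hmem2 : j ∈ (Finset.univ.erase e).erase j1 :=
            Finset.mem_erase.mpr ⟨hjj, Finset.mem_erase.mpr ⟨hje, Finset.mem_univ j⟩⟩
          have hA : z e + ∑ i ∈ Finset.univ.erase e, z i = ∑ i, z i :=
            Finset.add_sum_erase _ z (Finset.mem_univ e)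
          have hB : z j1 + ∑ i ∈ (Finset.univ.erase e).erase j1, z i
              = ∑ i ∈ Finset.univ.erase e, z i := Finset.add_sum_erase _ z hmem1
          have hC : z j + ∑ i ∈ ((Finset.univ.erase e).erase j1).erase j, z i
              = ∑ i ∈ (Finset.univ.erase e).erase j1, z i := Finset.add_sum_erase _ z hmem2
          have hD : ∑ i ∈ ((Finset.univ.erase e).erase j1).erase j, z i
              ≤ (((Finset.univ.erase e).erase j1).erase j).card • b :=
            Finset.sum_le_card_nsmul _ _ _ (fun i _ => hle i)
          have hc : (((Finset.univ.erase e).erase j1).erase j).card = k - 2 := by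
            rw [Finset.card_erase_of_mem hmem2, Finset.card_erase_of_mem hmem1,
              Finset.card_erase_of_mem (Finset.mem_univ e)]
            simp; omega
          rw [hc, smul_eq_mul] at hD
          have hkk : (k-2) * b + 2 * b = k * b := by
            have h5 : k - 2 + 2 = k := by omega
            nlinarith [h5]
          omega
        · exact hge
      · push_neg at h1
        have hge3 : ∀ j, j ≠ e → 3 ≤ z j := by
          intro j hje
          have := hodd' j hje
          have := h1 j hje
          have := hle j
          omega
        have hlt : ∃ js, js ≠ e ∧ z js < b := by
          by_contra hcon
          push_neg at hcon
          have hall : ∀ j, j ≠ e → z j = b := fun j hj => le_antisymm (hle j) (hcon j hj)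
          have hA : z e + ∑ i ∈ Finset.univ.erase e, z i = ∑ i, z i :=
            Finset.add_sum_erase _ z (Finset.mem_univ e)
          have hB : ∑ i ∈ Finset.univ.erase e, z i = (Finset.univ.erase e).card * b := by
            rw [Finset.sum_congr rfl (fun j hj => hall j (Finset.mem_erase.mp hj).1),
              Finset.sum_const, smul_eq_mul]
          have hc : (Finset.univ.erase e).card = k := by
            rw [Finset.card_erase_of_mem (Finset.mem_univ e)]; simp
          rw [hc] at hB
          omega
        obtain ⟨js, hjse, hjs⟩ := hlt
        have := hodd' js hjse
        exact ⟨js, hjse, by omega, fun j hje _ => hge3 j hje⟩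
    obtain ⟨js, hjse, hjsle, hrest⟩ := hstar
    refine ⟨fun j => if j = e then z e - 1 else if j = js then z js - 1 else z j - 2,
      ⟨?_, ?_, ?_, ?_⟩, ?_⟩
    · dsimp only
      have hdecomp : ∀ j : Fin (k+1), z j =
          (if j = e then z e - 1 else if j = js then z js - 1 else z j - 2)
          + (if j = e then 1 else if j = js then 1 else 2) := by
        intro j
        by_cases h1 : j = e
        · subst h1; rw [if_pos rfl, if_pos rfl]; omega
        · by_cases h2 : j = js
          · subst h2
            rw [if_neg h1, if_pos rfl, if_neg h1, if_pos rfl]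
            have := hodd' j h1; omega
          · have := hrest j h1 h2
            rw [if_neg h1, if_neg h2, if_neg h1, if_neg h2]; omega
      have h0 : ∑ j, z j = ∑ j, (if j = e then z e - 1 else if j = js then z js - 1 else z j - 2)
          + ∑ j, (if j = e then 1 else if j = js then 1 else 2) := by
        rw [← Finset.sum_add_distrib]
        exact Finset.sum_congr rfl (fun j _ => hdecomp j)
      have hmemjs : js ∈ Finset.univ.erase e := Finset.mem_erase.mpr ⟨hjse, Finset.mem_univ _⟩
      have hc1 : ∑ j, (if j = e then 1 else if j = js then 1 else 2) = 2 * k := by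
        rw [← Finset.add_sum_erase _ _ (Finset.mem_univ e), if_pos rfl,
          ← Finset.add_sum_erase _ _ hmemjs, if_neg hjse, if_pos rfl]
        have hcong : ∀ j ∈ (Finset.univ.erase e).erase js,
            (if j = e then (1:ℕ) else if j = js then 1 else 2) = 2 := by
          intro j hj
          have h := Finset.mem_erase.mp hj
          have h' := Finset.mem_erase.mp h.2
          rw [if_neg h'.1, if_neg h.1]
        rw [Finset.sum_congr rfl hcong, Finset.sum_const,
          Finset.card_erase_of_mem hmemjs, Finset.card_erase_of_mem (Finset.mem_univ e)]
        simp [smul_eq_mul]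
        omega
      have hfin : k * (b - 2) + 2 * k = k * b := by
        have h5 : b - 2 + 2 = b := by omega
        nlinarith [h5]
      omega
    · intro i
      dsimp only
      by_cases h1 : i = e
      · subst h1; rw [if_pos rfl]; omega
      · by_cases h2 : i = js
        · subst h2; rw [if_neg h1, if_pos rfl]; omega
        · have := hle i
          rw [if_neg h1, if_neg h2]; omega
    · intro hev; exfalso; have := Nat.even_iff.mp hev; omega
    · intro _
      have hjso := hodd' js hjse
      refine ⟨js, ?_, ?_⟩
      · dsimp only
        rw [if_neg hjse, if_pos rfl, Nat.even_iff]; omega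
      · intro j hj
        dsimp only at hj
        by_contra hne
        by_cases h1 : j = e
        · subst h1
          rw [if_pos rfl, Nat.even_iff] at hj; omega
        · have h3 := hrest j h1 hne
          have h4 := hodd' j h1
          rw [if_neg h1, if_neg hne, Nat.even_iff] at hj; omega
    · intro j
      dsimp only
      by_cases h1 : j = e
      · subst h1; rw [if_pos rfl]
      · by_cases h2 : j = js
        · subst h2; rw [if_neg h1, if_pos rfl]
        · have := hrest j h1 h2
          rw [if_neg h1, if_neg h2]; omega


lemma bval_bound (k b : ℕ) (x z : Fin (k+1) → ℕ) (hz : IsBasic k z b) (hp : Pre k z x)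
    (hk : 1 ≤ k) : b ≤ ∑ i, x i := by
  have h1 : ∑ i, z (Tuple.sort z i) = ∑ i, z i := Equiv.sum_comp (Tuple.sort z) z
  have h2 : ∑ i, x (Tuple.sort x i) = ∑ i, x i := Equiv.sum_comp (Tuple.sort x) x
  have h3 : ∑ i, z (Tuple.sort z i) ≤ ∑ i, x (Tuple.sort x i) :=
    Finset.sum_le_sum (fun i _ => hp i)
  have h4 : k * b ≤ ∑ i, x i := by rw [← hz.1, ← h2, ← h1] at *; exact h3
  calc b ≤ k * b := Nat.le_mul_of_pos_left b hk
    _ ≤ ∑ i, x i := h4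

theorem stmt8 (k : ℕ) (hk : 2 ≤ k) (x x' : Fin (k+1) → ℕ)
    (hodd : Odd (BVal k x)) (h : MoveK k x x') :
    BVal k x - 2 ≤ BVal k x' := by
  rcases Nat.lt_or_ge (BVal k x) 3 with hb3 | hb3
  · omega
  set b := BVal k x with hbdef
  have hbddS : BddAbove {b' | ∃ z, IsBasic k z b' ∧ Pre k z x} :=
    ⟨∑ i, x i, fun b' ⟨z, hz, hp⟩ => bval_bound k b' x z hz hp (by omega)⟩
  have hne : {b' | ∃ z, IsBasic k z b' ∧ Pre k z x}.Nonempty := by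
    by_contra hcon
    rw [Set.not_nonempty_iff_eq_empty] at hcon
    have : b = 0 := by
      rw [hbdef]; unfold BVal; rw [hcon]; exact csSup_empty
    omega
  have hmem : b ∈ {b' | ∃ z, IsBasic k z b' ∧ Pre k z x} := Nat.sSup_mem hne hbddS
  obtain ⟨z, hz, hpre⟩ := hmem
  obtain ⟨z', hz', hle'⟩ := construct k b hk hodd hb3 z hz
  obtain ⟨i0, hpos, hx'⟩ := h
  have hpre' : Pre k z' x' := by
    apply sorted_le z' x' ((Tuple.sort x).symm.trans (Tuple.sort z))
    intro j
    have h1 : z (Tuple.sort z ((Tuple.sort x).symm j)) ≤ x (Tuple.sort x ((Tuple.sort x).symm j)) :=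
      hpre ((Tuple.sort x).symm j)
    rw [Equiv.apply_symm_apply] at h1
    have h2 := hle' (Tuple.sort z ((Tuple.sort x).symm j))
    have h3 : x j - 1 ≤ x' j := by rw [hx' j]; split <;> omega
    simp only [Equiv.trans_apply]
    omega
  have hbddS' : BddAbove {b' | ∃ z, IsBasic k z b' ∧ Pre k z x'} :=
    ⟨∑ i, x' i, fun b' ⟨w, hw, hp⟩ => bval_bound k b' x' w hw hp (by omega)⟩
  exact le_csSup hbddS' ⟨z', hz', hpre'⟩
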